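/- arXiv:2204.02616 — 8 statements merged into one kernel-verified Lean document; each statement's English description precedes it below -/
import Mathlib

section
/- Every combinatory logic system is confluent: if a term t rewrites (via the reflexive-transitive closure of the context closure of the rules) to both s1 and s2, then there exists a term t' such that s1 and s2 both rewrite to t'. -/
/-- Terms over an alphabet `G` of basic combinators: variables, basic combinators, applications. -/
inductive CTerm (G : Type*) : Type _
  | var : ℕ → CTerm G
  | cst : G → CTerm G
  | app : CTerm G → CTerm G → CTerm G

/-- A term contains no basic combinator. -/
def CTerm.noCst {G : Type*} : CTerm G → Prop
  | .var _ => True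
  | .cst _ => False
  | .app a b => a.noCst ∧ b.noCst

/-- All variables of the term have index `< n`. -/
def CTerm.varsLT {G : Type*} (n : ℕ) : CTerm G → Prop
  | .var i => i < n
  | .cst _ => True
  | .app a b => a.varsLT n ∧ b.varsLT n

/-- Simultaneous substitution of terms for the variables. -/
def CTerm.subst {G : Type*} (σ : ℕ → CTerm G) : CTerm G → CTerm G
  | .var i => σ i
  | .cst c => .cst c
  | .app a b => .app (a.subst σ) (b.subst σ)

/-- The left-hand side `C s_0 ⋯ s_{n-1}` of a rule instance. -/
def CTerm.spine {G : Type*} (C : G) (n : ℕ) (σ : ℕ → CTerm G) : CTerm G :=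
  (List.range n).foldl (fun acc i => .app acc (σ i)) (.cst C)

/-- A combinatory logic system: each basic combinator `C` has exactly one rule
`C x_0 ⋯ x_{n-1} → t_C` with `n ≥ 1` and `t_C` a term with no basic combinator and
all variables among `x_0, …, x_{n-1}`. -/
structure CLS (G : Type*) where
  arity : G → ℕ
  arity_pos : ∀ C, 1 ≤ arity C
  rhs : G → CTerm G
  rhs_noCst : ∀ C, (rhs C).noCst
  rhs_vars : ∀ C, (rhs C).varsLT (arity C)

/-- Context closure of the rules of a CLS. -/
inductive CLS.Step {G : Type*} (S : CLS G) : CTerm G → CTerm G → Prop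
  | rule (C : G) (σ : ℕ → CTerm G) :
      CLS.Step S (CTerm.spine C (S.arity C) σ) ((S.rhs C).subst σ)
  | left {t t' : CTerm G} (u : CTerm G) : CLS.Step S t t' → CLS.Step S (.app t u) (.app t' u)
  | right (u : CTerm G) {t t' : CTerm G} : CLS.Step S t t' → CLS.Step S (.app u t) (.app u t')

namespace CLSProof

variable {G : Type*}

open CTerm Relation

theorem spine_succ (C : G) (n : ℕ) (σ : ℕ → CTerm G) :
    spine C (n+1) σ = .app (spine C n σ) (σ n) := by
  simp [CTerm.spine, List.range_succ]

theorem spine_congr (C : G) {n : ℕ} {σ τ : ℕ → CTerm G}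
    (h : ∀ i < n, σ i = τ i) : spine C n σ = spine C n τ := by
  induction n with
  | zero => rfl
  | succ n ih =>
    rw [spine_succ, spine_succ, ih (fun i hi => h i (Nat.lt_succ_of_lt hi)),
      h n (Nat.lt_succ_self n)]

theorem spine_inj {C D : G} {n m : ℕ} {σ τ : ℕ → CTerm G}
    (h : spine C n σ = spine D m τ) : C = D ∧ n = m ∧ ∀ i < n, σ i = τ i := by
  induction n generalizing m with
  | zero =>
    cases m with
    | zero =>
      refine ⟨?_, rfl, by omega⟩
      simpa [CTerm.spine] using h
    | succ m => rw [spine_succ] at h; simp [CTerm.spine] at h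
  | succ n ih =>
    cases m with
    | zero => rw [spine_succ] at h; simp [CTerm.spine] at h
    | succ m =>
      rw [spine_succ, spine_succ] at h
      injection h with h1 h2
      obtain ⟨hC, hn, hσ⟩ := ih h1
      subst hn
      refine ⟨hC, rfl, ?_⟩
      intro i hi
      rcases Nat.lt_succ_iff_lt_or_eq.mp hi with h' | h'
      · exact hσ i h'
      · subst h'; exact h2

theorem subst_congr {n : ℕ} {σ τ : ℕ → CTerm G} (h : ∀ i < n, σ i = τ i) :
    ∀ {t : CTerm G}, t.varsLT n → t.subst σ = t.subst τ
  | .var i, hv => h i hv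
  | .cst c, _ => rfl
  | .app a b, hv => by
    simp only [CTerm.subst]
    rw [subst_congr h hv.1, subst_congr h hv.2]

/-- Parallel reduction. -/
inductive Par (S : CLS G) : CTerm G → CTerm G → Prop
  | var (i : ℕ) : Par S (.var i) (.var i)
  | cst (c : G) : Par S (.cst c) (.cst c)
  | app {a a' b b' : CTerm G} : Par S a a' → Par S b b' → Par S (.app a b) (.app a' b')
  | rule (C : G) (σ σ' : ℕ → CTerm G) (h : ∀ i < S.arity C, Par S (σ i) (σ' i)) :
      Par S (spine C (S.arity C) σ) ((S.rhs C).subst σ')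

theorem par_refl (S : CLS G) : ∀ t : CTerm G, Par S t t
  | .var i => .var i
  | .cst c => .cst c
  | .app a b => .app (par_refl S a) (par_refl S b)

theorem step_to_par {S : CLS G} {a b : CTerm G} (h : S.Step a b) : Par S a b := by
  induction h with
  | rule C σ => exact .rule C σ σ (fun i _ => par_refl S _)
  | left u _ ih => exact .app ih (par_refl S u)
  | right u _ ih => exact .app (par_refl S u) ih

theorem steps_app_left {S : CLS G} {a a' : CTerm G} (b : CTerm G)
    (h : ReflTransGen S.Step a a') : ReflTransGen S.Step (.app a b) (.app a' b) :=
  ReflTransGen.lift (fun x => CTerm.app x b) (fun _ _ h => CLS.Step.left b h) _ _ h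

theorem steps_app_right {S : CLS G} (a : CTerm G) {b b' : CTerm G}
    (h : ReflTransGen S.Step b b') : ReflTransGen S.Step (.app a b) (.app a b') :=
  ReflTransGen.lift (fun x => CTerm.app a x) (fun _ _ h => CLS.Step.right a h) _ _ h

theorem spine_steps {S : CLS G} (C : G) {n : ℕ} {σ τ : ℕ → CTerm G}
    (h : ∀ i < n, ReflTransGen S.Step (σ i) (τ i)) :
    ReflTransGen S.Step (spine C n σ) (spine C n τ) := by
  induction n with
  | zero => exact .refl
  | succ n ih =>
    rw [spine_succ, spine_succ]
    exact (steps_app_left _ (ih (fun i hi => h i (Nat.lt_succ_of_lt hi)))).trans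
      (steps_app_right _ (h n (Nat.lt_succ_self n)))

theorem par_to_steps {S : CLS G} {a b : CTerm G} (h : Par S a b) :
    ReflTransGen S.Step a b := by
  induction h with
  | var i => exact .refl
  | cst c => exact .refl
  | app _ _ iha ihb => exact (steps_app_left _ iha).trans (steps_app_right _ ihb)
  | rule C σ σ' h ih =>
    exact (spine_steps C ih).trans (ReflTransGen.single (CLS.Step.rule C σ'))

theorem par_subst {S : CLS G} {n : ℕ} {σ τ : ℕ → CTerm G}
    (h : ∀ i < n, Par S (σ i) (τ i)) :
    ∀ {t : CTerm G}, t.noCst → t.varsLT n → Par S (t.subst σ) (t.subst τ)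
  | .var i, _, hv => h i hv
  | .cst _, hc, _ => absurd hc not_false
  | .app a b, hc, hv => .app (par_subst h hc.1 hv.1) (par_subst h hc.2 hv.2)

theorem spine_par {S : CLS G} (C : G) {n : ℕ} {σ τ : ℕ → CTerm G}
    (h : ∀ i < n, Par S (σ i) (τ i)) : Par S (spine C n σ) (spine C n τ) := by
  induction n with
  | zero => exact .cst C
  | succ n ih =>
    rw [spine_succ, spine_succ]
    exact .app (ih (fun i hi => h i (Nat.lt_succ_of_lt hi))) (h n (Nat.lt_succ_self n))

theorem spine_par_inv {S : CLS G} {C : G} {m : ℕ} (hm : m ≤ S.arity C)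
    {σ : ℕ → CTerm G} {u : CTerm G} (h : Par S (spine C m σ) u) :
    (∃ σ', (∀ i < m, Par S (σ i) (σ' i)) ∧ u = spine C m σ') ∨
    (m = S.arity C ∧ ∃ σ', (∀ i < m, Par S (σ i) (σ' i)) ∧ u = (S.rhs C).subst σ') := by
  induction m generalizing u with
  | zero =>
    generalize he : spine C 0 σ = a at h
    cases h with
    | var i => simp [CTerm.spine] at he
    | cst c =>
      exact Or.inl ⟨σ, fun i hi => absurd hi (Nat.not_lt_zero i), he.symm⟩
    | app h1 h2 => simp [CTerm.spine] at he
    | rule D τ τ' hτ =>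
      exfalso
      obtain ⟨k, hk⟩ := Nat.exists_eq_add_of_le (S.arity_pos D)
      rw [show S.arity D = k + 1 by omega, spine_succ] at he
      simp [CTerm.spine] at he
  | succ m ih =>
    rw [spine_succ] at h
    generalize he : CTerm.app (spine C m σ) (σ m) = a at h
    cases h with
    | var i => exact absurd he (by simp)
    | cst c => exact absurd he (by simp)
    | app h1 h2 =>
      rename_i a₀ a' b₀ b'
      injection he with e1 e2
      subst e1; subst e2
      rcases ih (le_of_lt (Nat.lt_of_succ_le hm)) h1 with ⟨σ', hσ', rfl⟩ | ⟨heq, _⟩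
      · refine Or.inl ⟨Function.update σ' m b', ?_, ?_⟩
        · intro i hi
          rcases Nat.lt_succ_iff_lt_or_eq.mp hi with h' | h'
          · rw [Function.update_of_ne (by omega)]
            exact hσ' i h'
          · subst h'
            rw [Function.update_self]
            exact h2
        · rw [spine_succ, Function.update_self,
            spine_congr C (τ := Function.update σ' m b')
              (fun i hi => (Function.update_of_ne (by omega) _ _).symm)]
      · exfalso; omega
    | rule D τ τ' hτ =>
      rw [← spine_succ] at he
      obtain ⟨hCD, hnm, hστ⟩ := spine_inj he
      subst hCD
      refine Or.inr ⟨by omega, τ', fun i hi => ?_, rfl⟩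
      rw [hστ i (by omega)]
      exact hτ i (by omega)

theorem par_diamond {S : CLS G} {a b : CTerm G} (hab : Par S a b) :
    ∀ c, Par S a c → ∃ d, Par S b d ∧ Par S c d := by
  induction hab with
  | var i =>
    intro c hc
    generalize he : CTerm.var i = a at hc
    cases hc with
    | var j => exact ⟨.var j, par_refl S _, par_refl S _⟩
    | cst c => exact absurd he (by simp)
    | app h1 h2 => exact absurd he (by simp)
    | rule D τ τ' hτ =>
      exfalso
      obtain ⟨k, hk⟩ := Nat.exists_eq_add_of_le (S.arity_pos D)
      rw [show S.arity D = k + 1 by omega, spine_succ] at he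
      exact absurd he (by simp)
  | cst c₀ =>
    intro c hc
    generalize he : CTerm.cst c₀ = a at hc
    cases hc with
    | var j => exact absurd he (by simp)
    | cst c => exact ⟨.cst c, par_refl S _, par_refl S _⟩
    | app h1 h2 => exact absurd he (by simp)
    | rule D τ τ' hτ =>
      exfalso
      obtain ⟨k, hk⟩ := Nat.exists_eq_add_of_le (S.arity_pos D)
      rw [show S.arity D = k + 1 by omega, spine_succ] at he
      exact absurd he (by simp)
  | @app a₀ a' b₀ b' ha hb iha ihb =>
    intro c hc
    generalize he : CTerm.app a₀ b₀ = x at hc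
    cases hc with
    | var j => exact absurd he (by simp)
    | cst c => exact absurd he (by simp)
    | app h1 h2 =>
      rename_i a₁ a₁' b₁ b₁'
      injection he with e1 e2
      subst e1; subst e2
      obtain ⟨d₁, hd₁, hd₁'⟩ := iha _ h1
      obtain ⟨d₂, hd₂, hd₂'⟩ := ihb _ h2
      exact ⟨.app d₁ d₂, .app hd₁ hd₂, .app hd₁' hd₂'⟩
    | rule D τ τ'' hτ =>
      -- app a₀ b₀ is the full spine of D; arity D = m + 1
      obtain ⟨k, hk⟩ := Nat.exists_eq_add_of_le (S.arity_pos D)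
      have harD : S.arity D = k + 1 := by omega
      rw [harD, spine_succ] at he
      injection he with e1 e2
      -- a₀ = spine D k τ, b₀ = τ k
      -- invert ha : Par S a₀ a'
      have ha' : Par S (spine D k τ) a' := e1 ▸ ha
      rcases spine_par_inv (by omega) ha' with ⟨σ₁, hσ₁, rfl⟩ | ⟨heq, _⟩
      · -- join a' = spine D k σ₁ with spine D k τ''
        have hspτ'' : Par S a₀ (spine D k τ'') := by
          rw [e1]
          exact spine_par D (fun i hi => hτ i (by omega))
        obtain ⟨d₁, hd₁, hd₁'⟩ := iha _ hspτ''
        rcases spine_par_inv (C := D) (by omega) hd₁ with ⟨κ, hκ, rfl⟩ | ⟨heq, _⟩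
        · rcases spine_par_inv (C := D) (by omega) hd₁' with ⟨ρ, hρ, hdeq⟩ | ⟨heq, _⟩
          · obtain ⟨_, _, hκρ⟩ := spine_inj hdeq
            obtain ⟨d₂, hd₂, hd₂'⟩ := ihb _ (show Par S b₀ (τ'' k) from e2 ▸ hτ k (by omega))
            refine ⟨(S.rhs D).subst (Function.update κ k d₂), ?_, ?_⟩
            · -- app (spine D k σ₁) b' ⇒
              have hsp : CTerm.app (spine D k σ₁) b' =
                  spine D (S.arity D) (Function.update σ₁ k b') := by
                rw [harD, spine_succ, Function.update_self,
                  spine_congr D (σ := Function.update σ₁ k b') (τ := σ₁)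
                    (fun i hi => Function.update_of_ne (by omega) _ _)]
              rw [hsp]
              refine Par.rule D _ _ (fun i hi => ?_)
              rw [harD] at hi
              rcases Nat.lt_succ_iff_lt_or_eq.mp hi with h' | h'
              · rw [Function.update_of_ne (by omega), Function.update_of_ne (by omega)]
                exact hκ i h'
              · subst h'
                rw [Function.update_self, Function.update_self]
                exact hd₂
            · -- (S.rhs D).subst τ'' ⇒
              refine par_subst (n := S.arity D) (fun i hi => ?_) (S.rhs_noCst D) (S.rhs_vars D)
              rw [harD] at hi
              rcases Nat.lt_succ_iff_lt_or_eq.mp hi with h' | h'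
              · rw [Function.update_of_ne (by omega), hκρ i h']
                exact hρ i h'
              · subst h'
                rw [Function.update_self]
                exact hd₂'
          · exfalso; omega
        · exfalso; omega
      · exfalso; omega
  | rule C σ σ' hσ ih =>
    intro c hc
    rcases spine_par_inv le_rfl hc with ⟨σ'', hσ'', rfl⟩ | ⟨_, σ'', hσ'', rfl⟩
    · -- c = spine C (arity) σ''
      classical
      set ρ : ℕ → CTerm G := fun i =>
        if h : i < S.arity C then (ih i h _ (hσ'' i h)).choose else σ i with hρdef
      have hρ1 : ∀ i < S.arity C, Par S (σ' i) (ρ i) := fun i hi => by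
        simp only [hρdef, dif_pos hi]
        exact (ih i hi _ (hσ'' i hi)).choose_spec.1
      have hρ2 : ∀ i < S.arity C, Par S (σ'' i) (ρ i) := fun i hi => by
        simp only [hρdef, dif_pos hi]
        exact (ih i hi _ (hσ'' i hi)).choose_spec.2
      exact ⟨(S.rhs C).subst ρ, par_subst hρ1 (S.rhs_noCst C) (S.rhs_vars C),
        Par.rule C σ'' ρ hρ2⟩
    · classical
      set ρ : ℕ → CTerm G := fun i =>
        if h : i < S.arity C then (ih i h _ (hσ'' i h)).choose else σ i with hρdef
      have hρ1 : ∀ i < S.arity C, Par S (σ' i) (ρ i) := fun i hi => by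
        simp only [hρdef, dif_pos hi]
        exact (ih i hi _ (hσ'' i hi)).choose_spec.1
      have hρ2 : ∀ i < S.arity C, Par S (σ'' i) (ρ i) := fun i hi => by
        simp only [hρdef, dif_pos hi]
        exact (ih i hi _ (hσ'' i hi)).choose_spec.2
      exact ⟨(S.rhs C).subst ρ, par_subst hρ1 (S.rhs_noCst C) (S.rhs_vars C),
        par_subst hρ2 (S.rhs_noCst C) (S.rhs_vars C)⟩

theorem parStar_to_stepStar {S : CLS G} {a b : CTerm G}
    (h : ReflTransGen (Par S) a b) : ReflTransGen S.Step a b := by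
  induction h with
  | refl => exact .refl
  | tail _ h2 ih => exact ih.trans (par_to_steps h2)

end CLSProof

/-- Every combinatory logic system is confluent. -/
theorem cls_confluent {G : Type*} [Fintype G] (S : CLS G) (t s₁ s₂ : CTerm G)
    (h₁ : Relation.ReflTransGen S.Step t s₁) (h₂ : Relation.ReflTransGen S.Step t s₂) :
    ∃ t' : CTerm G, Relation.ReflTransGen S.Step s₁ t' ∧ Relation.ReflTransGen S.Step s₂ t' := by
  have hp₁ : Relation.ReflTransGen (CLSProof.Par S) t s₁ :=
    Relation.ReflTransGen.mono (fun _ _ h => CLSProof.step_to_par h) _ _ h₁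
  have hp₂ : Relation.ReflTransGen (CLSProof.Par S) t s₂ :=
    Relation.ReflTransGen.mono (fun _ _ h => CLSProof.step_to_par h) _ _ h₂
  have hcr := Relation.church_rosser (r := CLSProof.Par S)
    (fun a b c hab hac => by
      obtain ⟨d, hbd, hcd⟩ := CLSProof.par_diamond hab c hac
      exact ⟨d, Relation.ReflGen.single hbd, Relation.ReflTransGen.single hcd⟩) hp₁ hp₂
  obtain ⟨d, hs₁, hs₂⟩ := hcr
  exact ⟨d, CLSProof.parStar_to_stepStar hs₁, CLSProof.parStar_to_stepStar hs₂⟩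
end

section
/- In the Mockingbird combinatory logic system, every equivalence class of terms under the reflexive-symmetric-transitive closure of the rewrite relation is finite. -/
inductive MTerm : Type
  | M : MTerm
  | var : ℕ → MTerm
  | app : MTerm → MTerm → MTerm

/-- One-step rewrite of the Mockingbird system: replace a subterm `M s` by `s s`. -/
inductive MStep : MTerm → MTerm → Prop
  | mock (s : MTerm) : MStep (.app .M s) (.app s s)
  | left {t t' : MTerm} (u : MTerm) : MStep t t' → MStep (.app t u) (.app t' u)
  | right (u : MTerm) {t t' : MTerm} : MStep t t' → MStep (.app u t) (.app u t')

/-- Rewrite order: reflexive-transitive closure of `MStep`. -/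
def MLe : MTerm → MTerm → Prop := Relation.ReflTransGen MStep

/-- A term is a combinator when it contains no variable. -/
def NoVar : MTerm → Prop
  | .M => True
  | .var _ => False
  | .app a b => NoVar a ∧ NoVar b

/-- Subterm (factor) relation. -/
inductive MSub : MTerm → MTerm → Prop
  | refl (t : MTerm) : MSub t t
  | left {s a : MTerm} (b : MTerm) : MSub s a → MSub s (.app a b)
  | right (a : MTerm) {s b : MTerm} : MSub s b → MSub s (.app a b)

/-- Height: maximal number of internal nodes on a root-to-leaf path. -/
def ht : MTerm → ℕ
  | .M => 0
  | .var _ => 0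
  | .app a b => max (ht a) (ht b) + 1

/-- Degree: number of application (internal) nodes. -/
def deg : MTerm → ℕ
  | .M => 0
  | .var _ => 0
  | .app a b => deg a + deg b + 1


/-- Set of variables occurring in a term. -/
def mvars : MTerm → Set ℕ
  | .M => ∅
  | .var n => {n}
  | .app a b => mvars a ∪ mvars b

lemma mvars_finite (t : MTerm) : (mvars t).Finite := by
  induction t with
  | M => exact Set.finite_empty
  | var n => exact Set.finite_singleton n
  | app a b ha hb => exact ha.union hb

lemma step_ht {t u : MTerm} (h : MStep t u) : ht u = ht t := by
  induction h with
  | mock s => simp [ht]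
  | left u _ ih => simp [ht, ih]
  | right u _ ih => simp [ht, ih]

lemma step_vars {t u : MTerm} (h : MStep t u) : mvars u = mvars t := by
  induction h with
  | mock s => simp [mvars]
  | left u _ ih => simp [mvars, ih]
  | right u _ ih => simp [mvars, ih]

lemma eqv_inv {t u : MTerm} (h : Relation.EqvGen MStep t u) :
    ht u = ht t ∧ mvars u = mvars t := by
  induction h with
  | rel a b hab => exact ⟨step_ht hab, step_vars hab⟩
  | refl a => exact ⟨rfl, rfl⟩
  | symm a b _ ih => exact ⟨ih.1.symm, ih.2.symm⟩
  | trans a b c _ _ ih1 ih2 => exact ⟨ih2.1.trans ih1.1, ih2.2.trans ih1.2⟩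

lemma bounded_finite (V : Set ℕ) (hV : V.Finite) :
    ∀ h : ℕ, {u : MTerm | ht u ≤ h ∧ mvars u ⊆ V}.Finite := by
  intro h
  induction h with
  | zero =>
    apply Set.Finite.subset (Set.Finite.union (Set.finite_singleton MTerm.M)
      (hV.image MTerm.var))
    rintro u ⟨hu, hv⟩
    cases u with
    | M => exact Or.inl rfl
    | var n => exact Or.inr ⟨n, hv (by simp [mvars]), rfl⟩
    | app a b => simp [ht] at hu
  | succ h ih =>
    apply Set.Finite.subset (Set.Finite.union ih (Set.Finite.image2 MTerm.app ih ih))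
    rintro u ⟨hu, hv⟩
    cases u with
    | M => exact Or.inl ⟨Nat.zero_le _, hv⟩
    | var n => exact Or.inl ⟨Nat.zero_le _, hv⟩
    | app a b =>
      right
      simp only [ht, Nat.add_le_add_iff_right, max_le_iff] at hu
      simp only [mvars, Set.union_subset_iff] at hv
      exact ⟨a, ⟨hu.1, hv.1⟩, b, ⟨hu.2, hv.2⟩, rfl⟩

/-- Every equivalence class under the reflexive-symmetric-transitive closure of the
Mockingbird rewrite relation is finite. -/
theorem mockingbird_locally_finite (t : MTerm) :
    {u : MTerm | Relation.EqvGen MStep t u}.Finite := by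
  apply Set.Finite.subset (bounded_finite (mvars t) (mvars_finite t) (ht t))
  rintro u hu
  obtain ⟨h1, h2⟩ := eqv_inv hu
  exact ⟨h1.le, h2.subset⟩
end

section
/- In the Mockingbird combinatory logic system, the reflexive-transitive closure of the one-step rewrite relation is antisymmetric, i.e., it is a partial order on terms over {M}. -/
/-- Number of `M` leaves. -/
def numM : MTerm → ℕ
  | .M => 1
  | .var _ => 0
  | .app a b => numM a + numM b

lemma step_deg {t t' : MTerm} (h : MStep t t') : deg t ≤ deg t' := by
  induction h with
  | mock s => simp [deg]
  | left u _ ih => simp [deg]; omega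
  | right u _ ih => simp [deg]; omega

lemma step_key {t t' : MTerm} (h : MStep t t') (hd : deg t = deg t') :
    numM t' ≤ numM t ∧ (numM t' = numM t → t = t') := by
  induction h with
  | mock s =>
    simp [deg] at hd
    cases s with
    | M => simp [numM]
    | var n => simp [numM]
    | app a b => simp [deg] at hd
  | left u h ih =>
    simp [deg] at hd
    obtain ⟨h1, h2⟩ := ih hd
    constructor
    · simp [numM]; omega
    · intro he
      simp [numM] at he
      have := h2 (by omega)
      rw [this]
  | right u h ih =>
    simp [deg] at hd
    obtain ⟨h1, h2⟩ := ih hd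
    constructor
    · simp [numM]; omega
    · intro he
      simp [numM] at he
      have := h2 (by omega)
      rw [this]

lemma le_deg {t t' : MTerm} (h : MLe t t') : deg t ≤ deg t' := by
  induction h with
  | refl => exact le_refl _
  | tail _ hs ih => exact le_trans ih (step_deg hs)

lemma le_key {t t' : MTerm} (h : MLe t t') (hd : deg t = deg t') :
    numM t' ≤ numM t ∧ (numM t' = numM t → t = t') := by
  induction h with
  | refl => simp
  | @tail b c hb hs ih =>
    have h1 : deg t ≤ deg b := le_deg hb
    have h2 : deg b ≤ deg c := step_deg hs
    have hdb : deg t = deg b := by omega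
    have hdc : deg b = deg c := by omega
    obtain ⟨a1, a2⟩ := ih hdb
    obtain ⟨b1, b2⟩ := step_key hs hdc
    constructor
    · omega
    · intro he
      have hb' : numM b = numM t := by omega
      have := a2 hb'
      rw [this]
      exact b2 (by omega)

/-- The Mockingbird rewrite order is antisymmetric, hence a partial order. -/
theorem mockingbird_poset (t t' : MTerm) (h : MLe t t') (h' : MLe t' t) : t = t' := by
  have hd : deg t = deg t' := le_antisymm (le_deg h) (le_deg h')
  obtain ⟨a1, a2⟩ := le_key h hd
  obtain ⟨b1, _⟩ := le_key h' hd.symm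
  exact a2 (le_antisymm a1 b1)
end

section
/- A combinator over {M} is a minimal element of the rewrite order (is not the result of any one-step rewrite from a different term) if and only if it avoids the pattern (x_1 x_2)(x_1 x_2), i.e., it has no subterm of the form (u v)(u v). -/
lemma step_cases_aux {t' t : MTerm} (h : MStep t' t) (hv : NoVar t) :
    t' = t ∨ ∃ u v, MSub (.app (.app u v) (.app u v)) t := by
  induction h with
  | mock s =>
    cases s with
    | M => left; rfl
    | var n => simp [NoVar] at hv
    | app u v => right; exact ⟨u, v, .refl _⟩
  | left u h ih =>
    rcases ih hv.1 with rfl | ⟨u', v', hs⟩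
    · left; rfl
    · right; exact ⟨u', v', .left _ hs⟩
  | right u h ih =>
    rcases ih hv.2 with rfl | ⟨u', v', hs⟩
    · left; rfl
    · right; exact ⟨u', v', .right _ hs⟩

lemma sub_step_aux' {s t : MTerm} (h : MSub s t) :
    ∀ u v, s = .app (.app u v) (.app u v) → NoVar t →
      ∃ t', NoVar t' ∧ MStep t' t ∧ deg t' < deg t := by
  induction h with
  | refl _ =>
    rintro u v rfl hv
    exact ⟨.app .M (.app u v), ⟨trivial, hv.1⟩, .mock _, by simp only [deg]; omega⟩
  | left b h ih =>
    rintro u v rfl hv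
    obtain ⟨t', h1, h2, h3⟩ := ih u v rfl hv.1
    exact ⟨.app t' b, ⟨h1, hv.2⟩, .left _ h2, by simp only [deg]; omega⟩
  | right a h ih =>
    rintro u v rfl hv
    obtain ⟨t', h1, h2, h3⟩ := ih u v rfl hv.2
    exact ⟨.app a t', ⟨hv.1, h1⟩, .right _ h2, by simp only [deg]; omega⟩

lemma sub_step_aux {u v t : MTerm} (h : MSub (.app (.app u v) (.app u v)) t) (hv : NoVar t) :
    ∃ t', NoVar t' ∧ MStep t' t ∧ deg t' < deg t :=
  sub_step_aux' h u v rfl hv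

/-- A combinator over {M} is a minimal element of the rewrite order if and only if it
avoids the pattern (x₁ x₂)(x₁ x₂), i.e. it has no subterm of the form (u v)(u v). -/
theorem mockingbird_minimal_iff (t : MTerm) (hc : NoVar t) :
    (∀ t', NoVar t' → MStep t' t → t' = t) ↔
      ∀ u v : MTerm, ¬ MSub (.app (.app u v) (.app u v)) t := by
  constructor
  · intro hmin u v hsub
    obtain ⟨t', h1, h2, h3⟩ := sub_step_aux hsub hc
    rw [hmin t' h1 h2] at h3
    exact lt_irrefl _ h3
  · intro hn t' hv' hs
    rcases step_cases_aux hs hc with h | ⟨u, v, hsub⟩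
    · exact h
    · exact absurd hsub (hn u v)
end

section
/- For every term t over {M}, the set of terms t' with t <= t' in the Mockingbird rewrite order is a finite lattice under this order. -/
lemma mle_refl (a : MTerm) : MLe a a := Relation.ReflTransGen.refl
lemma mle_trans {a b c : MTerm} (h1 : MLe a b) (h2 : MLe b c) : MLe a c :=
  Relation.ReflTransGen.trans h1 h2

lemma step_app {x y : MTerm} (h : MStep x y) : ∃ p q, y = .app p q := by
  cases h <;> exact ⟨_, _, rfl⟩

lemma no_step_M {u : MTerm} : ¬ MStep .M u := by intro h; cases h
lemma no_step_var {i : ℕ} {u : MTerm} : ¬ MStep (.var i) u := by intro h; cases h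

lemma MLe_M_eq {u : MTerm} (h : MLe .M u) : u = .M := by
  induction h with
  | refl => rfl
  | tail _ h ih => subst ih; exact absurd h no_step_M

lemma MLe_var_eq {i : ℕ} {u : MTerm} (h : MLe (.var i) u) : u = .var i := by
  induction h with
  | refl => rfl
  | tail _ h ih => subst ih; exact absurd h no_step_var

lemma MLe_ne_M {a b : MTerm} (h : MLe a b) (ha : a ≠ .M) : b ≠ .M := by
  induction h with
  | refl => exact ha
  | tail _ h _ => obtain ⟨p, q, rfl⟩ := step_app h; simp

lemma MLe_app_left {a a' : MTerm} (b : MTerm) (h : MLe a a') :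
    MLe (.app a b) (.app a' b) :=
  Relation.ReflTransGen.lift (fun x => MTerm.app x b) (fun _ _ hs => MStep.left b hs) _ _ h

lemma MLe_app_right (a : MTerm) {b b' : MTerm} (h : MLe b b') :
    MLe (.app a b) (.app a b') :=
  Relation.ReflTransGen.lift (fun x => MTerm.app a x) (fun _ _ hs => MStep.right a hs) _ _ h

lemma MLe_app_congr {a a' b b' : MTerm} (h1 : MLe a a') (h2 : MLe b b') :
    MLe (.app a b) (.app a' b') :=
  mle_trans (MLe_app_left b h1) (MLe_app_right a' h2)

lemma le_of_app {a b u : MTerm} (ha : a ≠ .M) (h : MLe (.app a b) u) :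
    ∃ a' b', u = .app a' b' ∧ MLe a a' ∧ MLe b b' := by
  induction h with
  | refl => exact ⟨a, b, rfl, mle_refl a, mle_refl b⟩
  | tail _ hs ih =>
    obtain ⟨a', b', rfl, h1, h2⟩ := ih
    cases hs with
    | mock s => exact absurd rfl (MLe_ne_M h1 ha)
    | left u hs' => exact ⟨_, b', rfl, h1.tail hs', h2⟩
    | right u hs' => exact ⟨a', _, rfl, h1, h2.tail hs'⟩

lemma le_of_Mapp {b u : MTerm} (h : MLe (.app .M b) u) :
    (∃ x, u = .app .M x ∧ MLe b x) ∨ (∃ c d, u = .app c d ∧ MLe b c ∧ MLe b d) := by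
  induction h with
  | refl => exact .inl ⟨b, rfl, mle_refl b⟩
  | tail _ hs ih =>
    rcases ih with ⟨x, rfl, hx⟩ | ⟨c, d, rfl, hc, hd⟩
    · cases hs with
      | mock s => exact .inr ⟨x, x, rfl, hx, hx⟩
      | left u hs' => exact absurd hs' no_step_M
      | right u hs' => exact .inl ⟨_, rfl, hx.tail hs'⟩
    · cases hs with
      | mock s => exact .inr ⟨d, d, rfl, hd, hd⟩
      | left u hs' => exact .inr ⟨_, d, rfl, hc.tail hs', hd⟩
      | right u hs' => exact .inr ⟨c, _, rfl, hc, hd.tail hs'⟩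

lemma Mapp_le_app {x c d : MTerm} (h1 : MLe x c) (h2 : MLe x d) :
    MLe (.app .M x) (.app c d) :=
  Relation.ReflTransGen.head (MStep.mock x) (MLe_app_congr h1 h2)

lemma le_of_Mapp_Mapp {x y : MTerm} (h : MLe (.app .M x) (.app .M y)) : MLe x y := by
  rcases le_of_Mapp h with ⟨z, heq, hz⟩ | ⟨c, d, heq, hc, hd⟩
  · cases heq; exact hz
  · cases heq; exact hd

lemma le_of_Mapp_app {x c d : MTerm} (hc : c ≠ .M) (h : MLe (.app .M x) (.app c d)) :
    MLe x c ∧ MLe x d := by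
  rcases le_of_Mapp h with ⟨z, heq, hz⟩ | ⟨c', d', heq, hc', hd'⟩
  · cases heq; exact absurd rfl hc
  · cases heq; exact ⟨hc', hd'⟩

lemma not_app_le_Mapp {c d y : MTerm} (hc : c ≠ .M) (h : MLe (.app c d) (.app .M y)) :
    False := by
  obtain ⟨c', d', heq, h1, _⟩ := le_of_app hc h
  cases heq
  exact MLe_ne_M h1 hc rfl

lemma app_le_app {a b c d : MTerm} (ha : a ≠ .M) (h : MLe (.app a b) (.app c d)) :
    MLe a c ∧ MLe b d := by
  obtain ⟨c', d', heq, h1, h2⟩ := le_of_app ha h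
  cases heq; exact ⟨h1, h2⟩

lemma MLe_MM_eq {u : MTerm} (h : MLe (.app .M .M) u) : u = .app .M .M := by
  induction h with
  | refl => rfl
  | tail _ hs ih =>
    subst ih
    cases hs with
    | mock s => rfl
    | left u hs' => exact absurd hs' no_step_M
    | right u hs' => exact absurd hs' no_step_M

def IsJoin (t a b s : MTerm) : Prop :=
  MLe t s ∧ MLe a s ∧ MLe b s ∧ ∀ w, MLe t w → MLe a w → MLe b w → MLe s w

def IsMeet (t a b m : MTerm) : Prop :=
  MLe t m ∧ MLe m a ∧ MLe m b ∧ ∀ w, MLe t w → MLe w a → MLe w b → MLe w m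

def LatP (t : MTerm) : Prop :=
  ∀ a b : MTerm, MLe t a → MLe t b → (∃ s, IsJoin t a b s) ∧ (∃ m, IsMeet t a b m)

lemma IsJoin_symm {t a b s : MTerm} (h : IsJoin t a b s) : IsJoin t b a s :=
  ⟨h.1, h.2.2.1, h.2.1, fun w hw hb ha => h.2.2.2 w hw ha hb⟩

lemma IsMeet_symm {t a b m : MTerm} (h : IsMeet t a b m) : IsMeet t b a m :=
  ⟨h.1, h.2.2.1, h.2.1, fun w hw hb ha => h.2.2.2 w hw ha hb⟩

/-- Trivial lattice on a one-point reduct set. -/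
lemma latP_of_singleton {t : MTerm} (h : ∀ u, MLe t u → u = t) : LatP t := by
  intro a b ha hb
  rw [h a ha, h b hb]
  exact ⟨⟨t, mle_refl t, mle_refl t, mle_refl t, fun w hw _ _ => hw⟩,
         ⟨t, mle_refl t, mle_refl t, mle_refl t, fun w _ hw _ => hw⟩⟩

/-- The mixed case (M-form join/meet with pair-form) for `t = app M b`, `b ≠ M`. -/
lemma Mhead_mixed {b : MTerm} (hb : b ≠ .M) (IH : LatP b)
    {x c d : MTerm} (hx : MLe b x) (hc : MLe b c) (hd : MLe b d) :
    (∃ s, IsJoin (.app .M b) (.app .M x) (.app c d) s) ∧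
    (∃ m, IsMeet (.app .M b) (.app .M x) (.app c d) m) := by
  have hcM : c ≠ .M := MLe_ne_M hc hb
  obtain ⟨⟨s1, hbs1, hxs1, hcs1, hs1min⟩, ⟨m1, hbm1, hm1x, hm1c, hm1max⟩⟩ := IH x c hx hc
  obtain ⟨⟨s2, hbs2, hxs2, hds2, hs2min⟩, -⟩ := IH x d hx hd
  obtain ⟨-, ⟨m, hbm, hmm1, hmd, hmmax⟩⟩ := IH m1 d hbm1 hd
  constructor
  · refine ⟨.app s1 s2, Mapp_le_app hbs1 hbs2, Mapp_le_app hxs1 hxs2,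
      MLe_app_congr hcs1 hds2, ?_⟩
    intro w htw huw hvw
    rcases le_of_Mapp htw with ⟨z, rfl, hz⟩ | ⟨e, f, rfl, he, hf⟩
    · exact absurd hvw (fun h => not_app_le_Mapp hcM h)
    · have heM : e ≠ .M := MLe_ne_M he hb
      obtain ⟨hxe, hxf⟩ := le_of_Mapp_app heM huw
      obtain ⟨hce, hdf⟩ := app_le_app hcM hvw
      exact MLe_app_congr (hs1min e he hxe hce) (hs2min f hf hxf hdf)
  · refine ⟨.app .M m, MLe_app_right _ hbm, MLe_app_right _ (mle_trans hmm1 hm1x),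
      Mapp_le_app (mle_trans hmm1 hm1c) hmd, ?_⟩
    intro w htw hwu hwv
    rcases le_of_Mapp htw with ⟨z, rfl, hz⟩ | ⟨e, f, rfl, he, hf⟩
    · have hzx : MLe z x := le_of_Mapp_Mapp hwu
      obtain ⟨hzc, hzd⟩ := le_of_Mapp_app hcM hwv
      exact MLe_app_right _ (hmmax z hz (hm1max z hz hzx hzc) hzd)
    · exact absurd hwu (fun h => not_app_le_Mapp (MLe_ne_M he hb) h)

lemma Mhead_latP {b : MTerm} (hb : b ≠ .M) (IH : LatP b) : LatP (.app .M b) := by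
  intro u v htu htv
  rcases le_of_Mapp htu with ⟨x, rfl, hx⟩ | ⟨c, d, rfl, hc, hd⟩
  · rcases le_of_Mapp htv with ⟨y, rfl, hy⟩ | ⟨c, d, rfl, hc, hd⟩
    · -- both M-form
      obtain ⟨⟨s, hbs, hxs, hys, hsmin⟩, ⟨m, hbm, hmx, hmy, hmmax⟩⟩ := IH x y hx hy
      constructor
      · refine ⟨.app .M s, MLe_app_right _ hbs, MLe_app_right _ hxs,
          MLe_app_right _ hys, ?_⟩
        intro w htw huw hvw
        rcases le_of_Mapp htw with ⟨z, rfl, hz⟩ | ⟨e, f, rfl, he, hf⟩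
        · exact MLe_app_right _ (hsmin z hz (le_of_Mapp_Mapp huw) (le_of_Mapp_Mapp hvw))
        · have heM : e ≠ .M := MLe_ne_M he hb
          obtain ⟨hxe, hxf⟩ := le_of_Mapp_app heM huw
          obtain ⟨hye, hyf⟩ := le_of_Mapp_app heM hvw
          exact Mapp_le_app (hsmin e he hxe hye) (hsmin f hf hxf hyf)
      · refine ⟨.app .M m, MLe_app_right _ hbm, MLe_app_right _ hmx,
          MLe_app_right _ hmy, ?_⟩
        intro w htw hwu hwv
        rcases le_of_Mapp htw with ⟨z, rfl, hz⟩ | ⟨e, f, rfl, he, hf⟩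
        · exact MLe_app_right _
            (hmmax z hz (le_of_Mapp_Mapp hwu) (le_of_Mapp_Mapp hwv))
        · exact absurd hwu (fun h => not_app_le_Mapp (MLe_ne_M he hb) h)
    · exact Mhead_mixed hb IH hx hc hd
  · rcases le_of_Mapp htv with ⟨y, rfl, hy⟩ | ⟨c', d', rfl, hc', hd'⟩
    · obtain ⟨⟨s, hs⟩, ⟨m, hm⟩⟩ := Mhead_mixed hb IH hy hc hd
      exact ⟨⟨s, IsJoin_symm hs⟩, ⟨m, IsMeet_symm hm⟩⟩
    · -- both pair-form
      have hcM : c ≠ .M := MLe_ne_M hc hb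
      obtain ⟨⟨s1, hbs1, hcs1, hc's1, hs1min⟩, ⟨m1, hbm1, hm1c, hm1c', hm1max⟩⟩ :=
        IH c c' hc hc'
      obtain ⟨⟨s2, hbs2, hds2, hd's2, hs2min⟩, ⟨m2, hbm2, hm2d, hm2d', hm2max⟩⟩ :=
        IH d d' hd hd'
      constructor
      · refine ⟨.app s1 s2, Mapp_le_app hbs1 hbs2, MLe_app_congr hcs1 hds2,
          MLe_app_congr hc's1 hd's2, ?_⟩
        intro w htw huw hvw
        rcases le_of_Mapp htw with ⟨z, rfl, hz⟩ | ⟨e, f, rfl, he, hf⟩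
        · exact absurd huw (fun h => not_app_le_Mapp hcM h)
        · obtain ⟨hce, hdf⟩ := app_le_app hcM huw
          obtain ⟨hc'e, hd'f⟩ := app_le_app (MLe_ne_M hc' hb) hvw
          exact MLe_app_congr (hs1min e he hce hc'e) (hs2min f hf hdf hd'f)
      · refine ⟨.app m1 m2, Mapp_le_app hbm1 hbm2, MLe_app_congr hm1c hm2d,
          MLe_app_congr hm1c' hm2d', ?_⟩
        intro w htw hwu hwv
        rcases le_of_Mapp htw with ⟨z, rfl, hz⟩ | ⟨e, f, rfl, he, hf⟩
        · obtain ⟨hzc, hzd⟩ := le_of_Mapp_app hcM hwu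
          obtain ⟨hzc', hzd'⟩ := le_of_Mapp_app (MLe_ne_M hc' hb) hwv
          exact Mapp_le_app (hm1max z hz hzc hzc') (hm2max z hz hzd hzd')
        · obtain ⟨hec, hfd⟩ := app_le_app (MLe_ne_M he hb) hwu
          obtain ⟨hec', hfd'⟩ := app_le_app (MLe_ne_M he hb) hwv
          exact MLe_app_congr (hm1max e he hec hec') (hm2max f hf hfd hfd')

lemma prod_latP {a b : MTerm} (ha : a ≠ .M) (IHa : LatP a) (IHb : LatP b) :
    LatP (.app a b) := by
  intro u v htu htv
  obtain ⟨a1, b1, rfl, ha1, hb1⟩ := le_of_app ha htu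
  obtain ⟨a2, b2, rfl, ha2, hb2⟩ := le_of_app ha htv
  have ha1M : a1 ≠ .M := MLe_ne_M ha1 ha
  have ha2M : a2 ≠ .M := MLe_ne_M ha2 ha
  obtain ⟨⟨sa, hasa, ha1sa, ha2sa, hsamin⟩, ⟨ma, hama, hma1, hma2, hmamax⟩⟩ :=
    IHa a1 a2 ha1 ha2
  obtain ⟨⟨sb, hbsb, hb1sb, hb2sb, hsbmin⟩, ⟨mb, hbmb, hmb1, hmb2, hmbmax⟩⟩ :=
    IHb b1 b2 hb1 hb2
  constructor
  · refine ⟨.app sa sb, MLe_app_congr hasa hbsb, MLe_app_congr ha1sa hb1sb,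
      MLe_app_congr ha2sa hb2sb, ?_⟩
    intro w htw huw hvw
    obtain ⟨e, f, rfl, hae, hbf⟩ := le_of_app ha htw
    obtain ⟨h1e, h1f⟩ := app_le_app ha1M huw
    obtain ⟨h2e, h2f⟩ := app_le_app ha2M hvw
    exact MLe_app_congr (hsamin e hae h1e h2e) (hsbmin f hbf h1f h2f)
  · refine ⟨.app ma mb, MLe_app_congr hama hbmb, MLe_app_congr hma1 hmb1,
      MLe_app_congr hma2 hmb2, ?_⟩
    intro w htw hwu hwv
    obtain ⟨e, f, rfl, hae, hbf⟩ := le_of_app ha htw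
    have heM : e ≠ .M := MLe_ne_M hae ha
    obtain ⟨he1, hf1⟩ := app_le_app heM hwu
    obtain ⟨he2, hf2⟩ := app_le_app heM hwv
    exact MLe_app_congr (hmamax e hae he1 he2) (hmbmax f hbf hf1 hf2)

lemma finite_reducts (t : MTerm) : {u : MTerm | MLe t u}.Finite := by
  induction t with
  | M => exact (Set.finite_singleton MTerm.M).subset (fun u hu => MLe_M_eq hu)
  | var i => exact (Set.finite_singleton (MTerm.var i)).subset (fun u hu => MLe_var_eq hu)
  | app a b iha ihb =>
    by_cases ha : a = MTerm.M
    · subst ha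
      apply Set.Finite.subset
        ((ihb.image (MTerm.app .M)).union
          ((ihb.prod ihb).image (fun p => MTerm.app p.1 p.2)))
      intro u hu
      rcases le_of_Mapp hu with ⟨x, rfl, hx⟩ | ⟨c, d, rfl, hc, hd⟩
      · exact Or.inl ⟨x, hx, rfl⟩
      · exact Or.inr ⟨(c, d), ⟨hc, hd⟩, rfl⟩
    · apply Set.Finite.subset ((iha.prod ihb).image (fun p => MTerm.app p.1 p.2))
      intro u hu
      obtain ⟨a', b', rfl, h1, h2⟩ := le_of_app ha hu
      exact ⟨(a', b'), ⟨h1, h2⟩, rfl⟩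

lemma latP_all (t : MTerm) : LatP t := by
  induction t with
  | M => exact latP_of_singleton (fun u hu => MLe_M_eq hu)
  | var i => exact latP_of_singleton (fun u hu => MLe_var_eq hu)
  | app a b iha ihb =>
    by_cases ha : a = MTerm.M
    · subst ha
      by_cases hb : b = MTerm.M
      · subst hb; exact latP_of_singleton (fun u hu => MLe_MM_eq hu)
      · exact Mhead_latP hb ihb
    · exact prod_latP ha iha ihb

/-- For every term t over {M}, the set of terms above t in the Mockingbird rewrite order
is a finite lattice: it is finite and every pair of its elements admits a least upper
bound and a greatest lower bound within it. -/
theorem mockingbird_finite_lattice (t : MTerm) :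
    {u : MTerm | MLe t u}.Finite ∧
    (∀ a b : MTerm, MLe t a → MLe t b →
      (∃ s, MLe t s ∧ MLe a s ∧ MLe b s ∧
        ∀ w, MLe t w → MLe a w → MLe b w → MLe s w) ∧
      (∃ m, MLe t m ∧ MLe m a ∧ MLe m b ∧
        ∀ w, MLe t w → MLe w a → MLe w b → MLe w m)) := by
  exact ⟨finite_reducts t, fun a b ha hb => latP_all t a b ha hb⟩
end

section
/- The Mockingbird lattice M(d) of order d has cardinality a(d-1) for d >= 1, where a(0) = 1 and a(n) = a(n-1) + a(n-1)^2 for n >= 1. In particular the cardinalities of M(0), M(1), M(2), ... are 1, 1, 2, 6, 42, 1806. -/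
/-- The right comb combinator of degree d: r₀ = M and r_d = M r_{d-1}. -/
def comb : ℕ → MTerm
  | 0 => .M
  | d + 1 => .app .M (comb d)

/-- a(0) = 1, a(n) = a(n-1) + a(n-1)². -/
def seqA : ℕ → ℕ
  | 0 => 1
  | n + 1 => seqA n + (seqA n) ^ 2

lemma mle_M_eq {t : MTerm} (h : MLe .M t) : t = .M := by
  rcases Relation.ReflTransGen.cases_head h with h | ⟨c, hc, _⟩
  · exact h.symm
  · cases hc

lemma mle_left {t t' : MTerm} (u : MTerm) (h : MLe t t') : MLe (.app t u) (.app t' u) :=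
  by induction h with
  | refl => exact Relation.ReflTransGen.refl
  | tail _ h2 ih => exact ih.tail (MStep.left u h2)

lemma mle_right (u : MTerm) {t t' : MTerm} (h : MLe t t') : MLe (.app u t) (.app u t') :=
  by induction h with
  | refl => exact Relation.ReflTransGen.refl
  | tail _ h2 ih => exact ih.tail (MStep.right u h2)

lemma mle_appM_iff {s t : MTerm} :
    MLe (.app .M s) t ↔ (∃ u, t = .app .M u ∧ MLe s u) ∨
      (∃ u v, t = .app u v ∧ MLe s u ∧ MLe s v) := by
  constructor
  · intro h
    induction h with
    | refl => exact .inl ⟨s, rfl, .refl⟩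
    | tail h1 h2 ih =>
      rcases ih with ⟨u, rfl, hu⟩ | ⟨u, v, rfl, hu, hv⟩
      · cases h2 with
        | mock => exact .inr ⟨u, u, rfl, hu, hu⟩
        | left _ h => cases h
        | right _ h => exact .inl ⟨_, rfl, hu.tail h⟩
      · cases h2 with
        | mock => exact .inr ⟨v, v, rfl, hv, hv⟩
        | left _ h => exact .inr ⟨_, v, rfl, hu.tail h, hv⟩
        | right _ h => exact .inr ⟨u, _, rfl, hu, hv.tail h⟩
  · rintro (⟨u, rfl, hu⟩ | ⟨u, v, rfl, hu, hv⟩)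
    · exact mle_right _ hu
    · exact (Relation.ReflTransGen.single (MStep.mock s)).trans
        ((mle_left _ hu).trans (mle_right _ hv))

def MSet (d : ℕ) : Set MTerm := {t | MLe (comb d) t}

lemma MSet_zero : MSet 0 = {MTerm.M} := by
  ext t
  exact ⟨fun h => mle_M_eq h, fun h => h ▸ Relation.ReflTransGen.refl⟩

lemma MSet_succ (d : ℕ) : MSet (d + 1) =
    (fun u => MTerm.app .M u) '' MSet d ∪ Set.image2 MTerm.app (MSet d) (MSet d) := by
  ext t
  simp only [MSet, comb, Set.mem_setOf_eq, Set.mem_union, Set.mem_image, Set.mem_image2,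
    mle_appM_iff]
  constructor
  · rintro (⟨u, rfl, hu⟩ | ⟨u, v, rfl, hu, hv⟩)
    · exact .inl ⟨u, hu, rfl⟩
    · exact .inr ⟨u, hu, v, hv, rfl⟩
  · rintro (⟨u, hu, rfl⟩ | ⟨u, hu, v, hv, rfl⟩)
    · exact .inl ⟨u, rfl, hu⟩
    · exact .inr ⟨u, v, rfl, hu, hv⟩

lemma MSet_finite (d : ℕ) : (MSet d).Finite := by
  induction d with
  | zero => rw [MSet_zero]; exact Set.finite_singleton _
  | succ d ih => rw [MSet_succ]; exact (ih.image _).union (ih.image2 _ ih)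

lemma MSet_app {d : ℕ} {t : MTerm} (h : t ∈ MSet (d + 1)) : ∃ a b, t = .app a b := by
  rw [MSet_succ] at h
  rcases h with ⟨u, _, rfl⟩ | ⟨u, _, v, _, rfl⟩ <;> exact ⟨_, _, rfl⟩

lemma M_notMem (d : ℕ) : MTerm.M ∉ MSet (d + 1) := by
  intro h
  obtain ⟨a, b, hab⟩ := MSet_app h
  exact MTerm.noConfusion hab

lemma MSet_one : MSet 1 = {MTerm.app .M .M} := by
  rw [MSet_succ, MSet_zero]
  simp

lemma ncard_image2 (d : ℕ) :
    (Set.image2 MTerm.app (MSet d) (MSet d)).ncard = (MSet d).ncard ^ 2 := by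
  rw [← Set.image_prod]
  rw [Set.ncard_image_of_injective _ (fun p q h => ?_)]
  · rw [← Nat.card_coe_set_eq, Nat.card_congr (Equiv.Set.prod _ _), Nat.card_prod,
      Nat.card_coe_set_eq, sq]
  · obtain ⟨h1, h2⟩ := MTerm.app.inj h
    exact Prod.ext h1 h2

lemma ncard_succ (d : ℕ) :
    (MSet (d + 2)).ncard = (MSet (d + 1)).ncard + (MSet (d + 1)).ncard ^ 2 := by
  rw [MSet_succ (d + 1)]
  rw [Set.ncard_union_eq ?_ ((MSet_finite _).image _) ((MSet_finite _).image2 _ (MSet_finite _))]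
  · rw [Set.ncard_image_of_injective _ (fun a b h => (MTerm.app.inj h).2), ncard_image2]
  · rw [Set.disjoint_left]
    rintro x ⟨u, _, rfl⟩ ⟨a, ha, b, _, hab⟩
    obtain ⟨h1, _⟩ := MTerm.app.inj hab.symm
    exact M_notMem d (h1 ▸ ha)

/-- The Mockingbird lattice M(d) = {t : comb d ≤ t} has cardinality a(d-1) for d ≥ 1;
together with M(0) of cardinality 1, the cardinalities are 1, 1, 2, 6, 42, 1806, …. -/
theorem mockingbird_lattice_card :
    Nat.card {t : MTerm // MLe (comb 0) t} = 1 ∧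
    ∀ d : ℕ, 1 ≤ d → Nat.card {t : MTerm // MLe (comb d) t} = seqA (d - 1) := by
  have key : ∀ d : ℕ, Nat.card {t : MTerm // MLe (comb d) t} = (MSet d).ncard := by
    intro d
    exact Nat.card_coe_set_eq (MSet d)
  constructor
  · rw [key, MSet_zero, Set.ncard_singleton]
  · intro d hd
    obtain ⟨e, rfl⟩ : ∃ e, d = e + 1 := ⟨d - 1, (Nat.succ_pred_eq_of_pos hd).symm⟩
    simp only [Nat.add_sub_cancel]
    rw [key]
    induction e with
    | zero => rw [MSet_one, Set.ncard_singleton]; rfl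
    | succ e ih =>
      rw [ncard_succ, ih (by omega)]
      rfl
end

section
/- Over any field of characteristic zero, the generating function F(z) counting maximal combinators of the Mockingbird rewrite poset by degree (number of applications) satisfies F = 1 + z + z F^2 - z F; consequently the coefficients are the Motzkin numbers 1, 1, 1, 2, 4, 9, 21, 51, ... -/
/-- Number of maximal combinators of the Mockingbird rewrite poset of degree d. -/
noncomputable def maxCount (d : ℕ) : ℕ :=
  Nat.card {t : MTerm // NoVar t ∧ (∀ t', MLe t t' → t' = t) ∧ deg t = d}

/-- The generating series of maximal combinators counted by degree, over a field K. -/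
noncomputable def maxSeries (K : Type*) [Field K] : PowerSeries K :=
  PowerSeries.mk fun d => (maxCount d : K)



deriving instance DecidableEq for MTerm

def Good : MTerm → Prop
  | .M => True
  | .var _ => False
  | .app a b => Good a ∧ Good b ∧ ¬(a = .M ∧ ∃ u v, b = .app u v)

lemma good_noVar : ∀ t, Good t → NoVar t
  | .M, _ => trivial
  | .var _, h => h.elim
  | .app a b, h => ⟨good_noVar a h.1, good_noVar b h.2.1⟩

lemma step_eq_of_good {t t' : MTerm} (h : MStep t t') (hg : Good t) : t' = t := by
  induction h with
  | mock s =>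
    obtain ⟨-, hs, hns⟩ := hg
    cases s with
    | M => rfl
    | var n => exact hs.elim
    | app u v => exact absurd ⟨rfl, u, v, rfl⟩ hns
  | left u h ih => rw [ih hg.1]
  | right u h ih => rw [ih hg.2.1]

lemma mle_eq_of_good {t t' : MTerm} (h : MLe t t') (hg : Good t) : t' = t := by
  induction h with
  | refl => rfl
  | tail hab hbc ih => subst ih; exact step_eq_of_good hbc hg

lemma exists_step_big : ∀ t : MTerm, NoVar t → ¬ Good t →
    ∃ t', MStep t t' ∧ deg t < deg t'
  | .M, _, hng => absurd trivial hng
  | .var _, hv, _ => hv.elim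
  | .app a b, hv, hng => by
    by_cases hga : Good a
    · by_cases hgb : Good b
      · have hbad : a = .M ∧ ∃ u v, b = .app u v := by
          by_contra hb
          exact hng ⟨hga, hgb, hb⟩
        obtain ⟨ha, u, v, hb⟩ := hbad
        subst ha; subst hb
        refine ⟨.app (.app u v) (.app u v), MStep.mock _, ?_⟩
        simp [deg]
      · obtain ⟨b', hs, hd⟩ := exists_step_big b hv.2 hgb
        exact ⟨.app a b', MStep.right a hs, by simp [deg]; omega⟩
    · obtain ⟨a', hs, hd⟩ := exists_step_big a hv.1 hga
      exact ⟨.app a' b, MStep.left b hs, by simp [deg]; omega⟩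

lemma good_iff (t : MTerm) :
    (NoVar t ∧ (∀ t', MLe t t' → t' = t)) ↔ Good t := by
  constructor
  · rintro ⟨hv, hmax⟩
    by_contra hng
    obtain ⟨t', hs, hd⟩ := exists_step_big t hv hng
    have : t' = t := hmax t' (Relation.ReflTransGen.single hs)
    subst this; omega
  · intro hg
    exact ⟨good_noVar t hg, fun t' h => mle_eq_of_good h hg⟩

open Finset in

def G : ℕ → Finset MTerm
  | 0 => {.M}
  | (d+1) =>
      (if d = 0 then {MTerm.app .M .M} else ∅) ∪
      (Finset.Ico 1 (d+1)).attach.biUnion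
        (fun i => ((G i.1) ×ˢ (G (d - i.1))).image fun p => MTerm.app p.1 p.2)
  decreasing_by
  · have := Finset.mem_Ico.1 i.2; omega
  · have := Finset.mem_Ico.1 i.2; omega

def g : ℕ → ℕ
  | 0 => 1
  | (d+1) => (if d = 0 then 1 else 0) +
      ∑ i ∈ (Finset.Ico 1 (d+1)).attach, g i.1 * g (d - i.1)
  decreasing_by
  · have := Finset.mem_Ico.1 i.2; omega
  · have := Finset.mem_Ico.1 i.2; omega

lemma grec (d : ℕ) : g (d+1) = (if d = 0 then 1 else 0) +
    ∑ i ∈ Finset.Ico 1 (d+1), g i * g (d - i) := by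
  rw [g]
  congr 1
  exact Finset.sum_attach (Finset.Ico 1 (d+1)) (fun i => g i * g (d - i))

lemma memG : ∀ d t, t ∈ G d ↔ (Good t ∧ deg t = d) := by
  intro d
  induction d using Nat.strong_induction_on with
  | _ d ih =>
  intro t
  match d with
  | 0 =>
    rw [G]
    simp only [Finset.mem_singleton]
    constructor
    · rintro rfl; exact ⟨trivial, rfl⟩
    · rintro ⟨hg, hd⟩
      cases t with
      | M => rfl
      | var n => exact hg.elim
      | app a b => simp [deg] at hd
  | (e+1) =>
    rw [G]
    simp only [Finset.mem_union, Finset.mem_biUnion, Finset.mem_attach, Finset.mem_image,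
      Finset.mem_product, true_and, Subtype.exists]
    constructor
    · rintro (h1 | ⟨i, hi, ⟨a, b⟩, ⟨ha, hb⟩, rfl⟩)
      · split at h1
        · next h0 =>
          subst h0
          simp only [Finset.mem_singleton] at h1
          subst h1
          exact ⟨⟨trivial, trivial, by rintro ⟨-, u, v, h⟩; cases h⟩, rfl⟩
        · simp at h1
      · have hi' := Finset.mem_Ico.1 hi
        have hA := (ih i (by omega) a).1 ha
        have hB := (ih (e - i) (by omega) b).1 hb
        have hanm : a ≠ .M := by
          intro h; subst h; simp [deg] at hA; omega
        refine ⟨⟨hA.1, hB.1, by rintro ⟨h, -⟩; exact hanm h⟩, ?_⟩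
        simp only [deg]; omega
    · rintro ⟨hg, hd⟩
      cases t with
      | M => simp [deg] at hd
      | var n => exact hg.elim
      | app a b =>
        obtain ⟨hga, hgb, hbad⟩ := hg
        simp only [deg] at hd
        cases a with
        | var n => exact hga.elim
        | M =>
          -- b cannot be an app
          cases b with
          | var n => exact hgb.elim
          | app u v => exact absurd ⟨rfl, u, v, rfl⟩ hbad
          | M =>
            left
            have he : e = 0 := by simp [deg] at hd; omega
            subst he
            simp
        | app a1 a2 =>
          right
          have hda : 1 ≤ deg (MTerm.app a1 a2) := by simp [deg]
          have key : deg (MTerm.app a1 a2) + deg b = e := by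
            simp only [deg] at hd ⊢; omega
          refine ⟨deg (.app a1 a2), Finset.mem_Ico.2 ⟨hda, by omega⟩, (.app a1 a2, b),
            ⟨?_, ?_⟩, rfl⟩
          · exact (ih _ (by omega) _).2 ⟨hga, rfl⟩
          · exact (ih _ (by omega) _).2 ⟨hgb, by show deg b = e - deg (MTerm.app a1 a2); omega⟩

lemma happ_inj : Function.Injective (fun p : MTerm × MTerm => MTerm.app p.1 p.2) := by
  rintro ⟨a, b⟩ ⟨a', b'⟩ h
  cases h; rfl

lemma cardG : ∀ d, (G d).card = g d := by
  intro d
  induction d using Nat.strong_induction_on with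
  | _ d ih =>
  match d with
  | 0 => rw [G, g]; rfl
  | (e+1) =>
    have hpair : ∀ i ∈ (Finset.Ico 1 (e+1)).attach, ∀ j ∈ (Finset.Ico 1 (e+1)).attach,
        i ≠ j → Disjoint ((G i.1 ×ˢ G (e - i.1)).image fun p => MTerm.app p.1 p.2)
          ((G j.1 ×ˢ G (e - j.1)).image fun p => MTerm.app p.1 p.2) := by
      intro i _ j _ hij
      rw [Finset.disjoint_left]
      rintro t ht ht'
      obtain ⟨⟨a, b⟩, hab, rfl⟩ := Finset.mem_image.1 ht
      obtain ⟨⟨a', b'⟩, hab', heq⟩ := Finset.mem_image.1 ht'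
      simp only at heq
      cases heq
      apply hij
      apply Subtype.ext
      have h1 := ((memG i.1 a).1 (Finset.mem_product.1 hab).1).2
      have h2 := ((memG j.1 a).1 (Finset.mem_product.1 hab').1).2
      omega
    have hdisj : Disjoint (if e = 0 then ({MTerm.app .M .M} : Finset MTerm) else ∅)
        ((Finset.Ico 1 (e+1)).attach.biUnion
          (fun i => ((G i.1) ×ˢ (G (e - i.1))).image fun p => MTerm.app p.1 p.2)) := by
      rcases Nat.eq_zero_or_pos e with he | he
      · subst he; simp
      · rw [if_neg (by omega)]; simp
    rw [G, grec]
    rw [Finset.card_union_of_disjoint hdisj, Finset.card_biUnion hpair]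
    congr 1
    · split <;> simp
    · rw [← Finset.sum_attach (Finset.Ico 1 (e+1)) (fun i => g i * g (e - i))]
      refine Finset.sum_congr rfl fun i _ => ?_
      have hi := Finset.mem_Ico.1 i.2
      rw [Finset.card_image_of_injective _ happ_inj, Finset.card_product,
        ih i.1 (by omega), ih (e - i.1) (by omega)]
lemma g0 : g 0 = 1 := by rw [g]
lemma g1 : g 1 = 1 := by rw [grec]; simp
lemma g2 : g 2 = 1 := by
  rw [grec, Finset.sum_Ico_eq_sum_range]; simp [Finset.sum_range_succ, g0, g1]
lemma g3 : g 3 = 2 := by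
  rw [grec, Finset.sum_Ico_eq_sum_range]; simp [Finset.sum_range_succ, g0, g1, g2]
lemma g4 : g 4 = 4 := by
  rw [grec, Finset.sum_Ico_eq_sum_range]; simp [Finset.sum_range_succ, g0, g1, g2, g3]
lemma g5 : g 5 = 9 := by
  rw [grec, Finset.sum_Ico_eq_sum_range]
  norm_num [Finset.sum_range_succ, g0, g1, g2, g3, g4]
lemma g6 : g 6 = 21 := by
  rw [grec, Finset.sum_Ico_eq_sum_range]
  norm_num [Finset.sum_range_succ, g0, g1, g2, g3, g4, g5]
lemma g7 : g 7 = 51 := by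
  rw [grec, Finset.sum_Ico_eq_sum_range]
  norm_num [Finset.sum_range_succ, g0, g1, g2, g3, g4, g5, g6]

lemma maxCount_eq (d : ℕ) : maxCount d = g d := by
  rw [maxCount, ← cardG d]
  have e : {t : MTerm // NoVar t ∧ (∀ t', MLe t t' → t' = t) ∧ deg t = d} ≃
      {t : MTerm // t ∈ G d} :=
    Equiv.subtypeEquivRight fun t => by
      rw [memG, ← good_iff, and_assoc]
  rw [Nat.card_congr e, Nat.card_eq_fintype_card, Fintype.card_coe]

lemma gkey (n : ℕ) : g (n+1) + g n = (if n = 0 then 1 else 0) +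
    ∑ i ∈ Finset.range (n+1), g i * g (n - i) := by
  rw [grec, Finset.range_eq_Ico, Finset.sum_eq_sum_Ico_succ_bot (Nat.succ_pos n)]
  simp only [Nat.sub_zero, g0, one_mul, zero_add, Nat.succ_eq_add_one]
  omega

open PowerSeries in
/-- Over any field of characteristic zero, the generating series F of maximal combinators
counted by degree satisfies F = 1 + z + z F² - z F; its coefficients are the Motzkin
numbers 1, 1, 1, 2, 4, 9, 21, 51, …. -/
theorem maximal_generating_series (K : Type*) [Field K] [CharZero K] :
    maxSeries K = 1 + X + X * maxSeries K ^ 2 - X * maxSeries K ∧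
    maxCount 0 = 1 ∧ maxCount 1 = 1 ∧ maxCount 2 = 1 ∧ maxCount 3 = 2 ∧
    maxCount 4 = 4 ∧ maxCount 5 = 9 ∧ maxCount 6 = 21 ∧ maxCount 7 = 51 := by
  refine ⟨?_, by rw [maxCount_eq, g0], by rw [maxCount_eq, g1], by rw [maxCount_eq, g2],
    by rw [maxCount_eq, g3], by rw [maxCount_eq, g4], by rw [maxCount_eq, g5],
    by rw [maxCount_eq, g6], by rw [maxCount_eq, g7]⟩
  have hms : maxSeries K = PowerSeries.mk fun d => (g d : K) := by
    simp only [maxSeries, maxCount_eq]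
  rw [hms]
  ext n
  cases n with
  | zero =>
    rw [map_sub, map_add, map_add, PowerSeries.coeff_zero_eq_constantCoeff,
      map_mul, map_mul]
    simp [g0, PowerSeries.constantCoeff_mk]
  | succ n =>
    rw [map_sub, map_add, map_add, PowerSeries.coeff_succ_X_mul, PowerSeries.coeff_succ_X_mul,
      PowerSeries.coeff_one, PowerSeries.coeff_X, PowerSeries.coeff_mk, PowerSeries.coeff_mk,
      sq, PowerSeries.coeff_mul]
    simp only [PowerSeries.coeff_mk]
    rw [Finset.Nat.sum_antidiagonal_eq_sum_range_succ_mk]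
    have hkey := gkey n
    have hcast := congrArg (fun m : ℕ => (m : K)) hkey
    push_cast at hcast
    push_cast
    simp only [Nat.succ_eq_add_one]
    linear_combination hcast
end

section
/- The number a(d) of combinators over {M} of degree d avoiding the factor (x_1 x_2)(x_1 x_2) satisfies a(0) = a(1) = 1 and, for d >= 2, a(d) = b(d-1) - [d odd] * a((d-1)/2), where b(d) = sum_{i=0}^{d} a(i) a(d-i). The first values are 1, 1, 2, 4, 12, 34, 108, 344. -/
/-- Number of combinators over {M} of degree d avoiding the factor (x₁ x₂)(x₁ x₂). -/
noncomputable def aCount (d : ℕ) : ℕ :=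
  Nat.card {t : MTerm // NoVar t ∧ deg t = d ∧
    ∀ u v : MTerm, ¬ MSub (.app (.app u v) (.app u v)) t}

/-- b(d) = ∑_{i=0}^{d} a(i) a(d-i). -/
noncomputable def bCount (d : ℕ) : ℕ := ∑ i ∈ Finset.range (d + 1), aCount i * aCount (d - i)

deriving instance DecidableEq for MTerm

def MTerm.isAppB : MTerm → Bool
  | .app _ _ => true
  | _ => false

def Avoid (t : MTerm) : Prop :=
  ∀ u v : MTerm, ¬ MSub (.app (.app u v) (.app u v)) t

lemma avoid_M : Avoid .M := by
  intro u v h; cases h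

lemma avoid_app {a b : MTerm} :
    Avoid (.app a b) ↔ Avoid a ∧ Avoid b ∧ ¬(a = b ∧ a.isAppB = true) := by
  constructor
  · intro H
    refine ⟨fun u v h => H u v (.left b h), fun u v h => H u v (.right a h), ?_⟩
    rintro ⟨rfl, happ⟩
    cases a with
    | M => simp [MTerm.isAppB] at happ
    | var n => simp [MTerm.isAppB] at happ
    | app u v => exact H u v (.refl _)
  · rintro ⟨ha, hb, hne⟩ u v h
    cases h with
    | refl => exact hne ⟨rfl, rfl⟩
    | left _ h' => exact ha u v h'
    | right _ h' => exact hb u v h'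

def terms : ℕ → Finset MTerm
  | 0 => {MTerm.M}
  | (d+1) => (Finset.range (d+1)).attach.biUnion fun i =>
      ((terms i.1 ×ˢ terms (d - i.1)).filter
        (fun p => ¬(p.1 = p.2 ∧ p.1.isAppB = true))).image
        (fun p => MTerm.app p.1 p.2)
decreasing_by
  · have := Finset.mem_range.mp i.2; omega
  · omega

theorem mem_terms : ∀ d t, t ∈ terms d ↔ NoVar t ∧ deg t = d ∧ Avoid t := by
  intro d
  induction d using Nat.strong_induction_on with
  | _ d ih =>
    match d with
    | 0 =>
      intro t
      simp only [terms, Finset.mem_singleton]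
      constructor
      · rintro rfl; exact ⟨trivial, rfl, avoid_M⟩
      · rintro ⟨h1, h2, _⟩
        cases t with
        | M => rfl
        | var n => exact absurd h1 (by simp [NoVar])
        | app a b => simp [deg] at h2
    | (e+1) =>
      intro t
      rw [terms]
      simp only [Finset.mem_biUnion, Finset.mem_attach, Finset.mem_image,
        Finset.mem_filter, Finset.mem_product, true_and]
      constructor
      · rintro ⟨⟨i, hi⟩, ⟨a, b⟩, ⟨⟨ha, hb⟩, hP⟩, rfl⟩
        have hi' := Finset.mem_range.mp hi
        rw [ih i (by omega) a] at ha
        rw [ih (e - i) (by omega) b] at hb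
        refine ⟨⟨ha.1, hb.1⟩, ?_, ?_⟩
        · simp only [deg]; omega
        · exact avoid_app.mpr ⟨ha.2.2, hb.2.2, hP⟩
      · rintro ⟨hnv, hdeg, hav⟩
        cases t with
        | M => simp [deg] at hdeg
        | var n => exact absurd hnv (by simp [NoVar])
        | app a b =>
          simp only [deg] at hdeg
          obtain ⟨ha, hb, hP⟩ := avoid_app.mp hav
          refine ⟨⟨deg a, Finset.mem_range.mpr (by omega)⟩, ⟨a, b⟩, ⟨⟨?_, ?_⟩, hP⟩, rfl⟩
          · exact (ih (deg a) (by omega) a).mpr ⟨hnv.1, rfl, ha⟩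
          · exact (ih (e - deg a) (by omega) b).mpr ⟨hnv.2, by omega, hb⟩


lemma aCount_eq (d : ℕ) : aCount d = (terms d).card := by
  unfold aCount
  have h : ∀ t : MTerm, (NoVar t ∧ deg t = d ∧
      ∀ u v : MTerm, ¬ MSub (.app (.app u v) (.app u v)) t) ↔ t ∈ terms d :=
    fun t => (mem_terms d t).symm
  rw [Nat.card_congr (Equiv.subtypeEquivRight h), Nat.card_eq_fintype_card, Fintype.card_coe]

lemma isAppB_of_deg_pos {a : MTerm} (h : deg a ≠ 0) : a.isAppB = true := by
  cases a <;> simp [deg, MTerm.isAppB] at h ⊢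


lemma card_split (e i : ℕ) :
    ((terms i ×ˢ terms (e - i)).filter (fun p => ¬(p.1 = p.2 ∧ p.1.isAppB = true))).card
      + ((terms i ×ˢ terms (e - i)).filter (fun p => p.1 = p.2 ∧ p.1.isAppB = true)).card
      = aCount i * aCount (e - i) := by
  have key := Finset.card_filter_add_card_filter_not
    (s := terms i ×ˢ terms (e - i))
    (fun p : MTerm × MTerm => p.1 = p.2 ∧ p.1.isAppB = true)
  rw [Finset.card_product, ← aCount_eq, ← aCount_eq] at key
  rw [add_comm]
  convert key using 3

lemma bad_card (e i : ℕ) (h : i ≤ e) :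
    ((terms i ×ˢ terms (e - i)).filter (fun p => p.1 = p.2 ∧ p.1.isAppB = true)).card
      = if 2 * i = e ∧ i ≠ 0 then aCount i else 0 := by
  by_cases h2 : 2 * i = e ∧ i ≠ 0
  · rw [if_pos h2]
    have hei : e - i = i := by omega
    have himg : (terms i ×ˢ terms (e - i)).filter (fun p => p.1 = p.2 ∧ p.1.isAppB = true)
        = (terms i).image (fun a => (a, a)) := by
      ext ⟨x, y⟩
      simp only [Finset.mem_filter, Finset.mem_product, Finset.mem_image, hei]
      constructor
      · rintro ⟨⟨h1, _⟩, heq, _⟩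
        exact ⟨x, h1, by simp [heq]⟩
      · rintro ⟨a, ha, haa⟩
        obtain ⟨rfl, rfl⟩ : a = x ∧ a = y :=
          ⟨congrArg Prod.fst haa, congrArg Prod.snd haa⟩
        have hd := ((mem_terms i a).mp ha).2.1
        exact ⟨⟨ha, ha⟩, rfl, isAppB_of_deg_pos (hd ▸ h2.2)⟩
    rw [himg, Finset.card_image_of_injective _ (fun a b hab => congrArg Prod.fst hab), aCount_eq]
  · rw [if_neg h2, Finset.card_eq_zero, Finset.eq_empty_iff_forall_notMem]
    rintro ⟨x, y⟩ hp
    simp only [Finset.mem_filter, Finset.mem_product] at hp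
    obtain ⟨⟨h1, hb⟩, heq, happ⟩ := hp
    subst heq
    have hda := ((mem_terms i x).mp h1).2.1
    have hdb := ((mem_terms (e - i) x).mp hb).2.1
    by_cases h0 : i = 0
    · subst h0
      cases x <;> simp [deg, MTerm.isAppB] at hda happ
    · exact h2 ⟨by omega, h0⟩

lemma aCount_succ (e : ℕ) :
    aCount (e + 1) = bCount e - (if Even e ∧ e ≠ 0 then aCount (e / 2) else 0) := by
  have hinj : Function.Injective (fun p : MTerm × MTerm => MTerm.app p.1 p.2) := by
    intro p q h
    injection h with h1 h2
    exact Prod.ext h1 h2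
  have hdisj : ∀ x ∈ (Finset.range (e+1)).attach, ∀ y ∈ (Finset.range (e+1)).attach,
      x ≠ y → Disjoint
        (((terms x.1 ×ˢ terms (e - x.1)).filter
          (fun p => ¬(p.1 = p.2 ∧ p.1.isAppB = true))).image (fun p => MTerm.app p.1 p.2))
        (((terms y.1 ×ˢ terms (e - y.1)).filter
          (fun p => ¬(p.1 = p.2 ∧ p.1.isAppB = true))).image (fun p => MTerm.app p.1 p.2)) := by
    intro x _ y _ hxy
    rw [Finset.disjoint_left]
    rintro t hx hy
    simp only [Finset.mem_image, Finset.mem_filter, Finset.mem_product] at hx hy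
    obtain ⟨⟨a, b⟩, ⟨⟨ha, _⟩, _⟩, rfl⟩ := hx
    obtain ⟨⟨a', b'⟩, ⟨⟨ha', _⟩, _⟩, heq⟩ := hy
    injection heq with h1 h2
    subst h1; subst h2
    exact hxy (Subtype.ext (by
      rw [← ((mem_terms x.1 a').mp ha).2.1, ← ((mem_terms y.1 a').mp ha').2.1]))
  have hcard : aCount (e + 1) = ∑ i ∈ Finset.range (e + 1),
      ((terms i ×ˢ terms (e - i)).filter
        (fun p => ¬(p.1 = p.2 ∧ p.1.isAppB = true))).card := by
    rw [aCount_eq, terms, Finset.card_biUnion hdisj]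
    rw [Finset.sum_congr rfl (fun i _ => Finset.card_image_of_injective
      ((terms i.1 ×ˢ terms (e - i.1)).filter
        (fun p => ¬(p.1 = p.2 ∧ p.1.isAppB = true))) hinj)]
    exact Finset.sum_attach (Finset.range (e+1)) (fun i =>
      ((terms i ×ˢ terms (e - i)).filter
        (fun p => ¬(p.1 = p.2 ∧ p.1.isAppB = true))).card)
  have h2 : (∑ i ∈ Finset.range (e + 1),
        ((terms i ×ˢ terms (e - i)).filter
          (fun p => ¬(p.1 = p.2 ∧ p.1.isAppB = true))).card)
      + (∑ i ∈ Finset.range (e + 1),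
        ((terms i ×ˢ terms (e - i)).filter
          (fun p => p.1 = p.2 ∧ p.1.isAppB = true)).card) = bCount e := by
    rw [← Finset.sum_add_distrib]
    exact Finset.sum_congr rfl (fun i _ => card_split e i)
  have hbadv : (∑ i ∈ Finset.range (e + 1),
        ((terms i ×ˢ terms (e - i)).filter
          (fun p => p.1 = p.2 ∧ p.1.isAppB = true)).card)
      = (if Even e ∧ e ≠ 0 then aCount (e / 2) else 0) := by
    rw [Finset.sum_congr rfl (fun i hi => bad_card e i (by
      have := Finset.mem_range.mp hi; omega))]
    by_cases he : Even e ∧ e ≠ 0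
    · obtain ⟨⟨k, hk⟩, he0⟩ := he
      rw [if_pos ⟨⟨k, hk⟩, he0⟩]
      rw [Finset.sum_congr rfl (fun i hi => show
          (if 2 * i = e ∧ i ≠ 0 then aCount i else 0) = (if i = k then aCount i else 0) by
        rcases eq_or_ne i k with rfl | hne
        · rw [if_pos rfl, if_pos ⟨by omega, by omega⟩]
        · rw [if_neg hne, if_neg (by rintro ⟨h', -⟩; omega)])]
      rw [Finset.sum_ite_eq' (Finset.range (e+1)) k aCount,
        if_pos (Finset.mem_range.mpr (by omega))]
      congr 1
      omega
    · rw [if_neg he, Finset.sum_eq_zero]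
      intro i _
      rw [if_neg]
      rintro ⟨h', h0⟩
      exact he ⟨⟨i, by omega⟩, by omega⟩
  rw [hcard, ← h2, hbadv]
  omega

lemma aCount_zero : aCount 0 = 1 := by
  rw [aCount_eq, show terms 0 = {MTerm.M} from by rw [terms], Finset.card_singleton]

lemma aCount_rec (d : ℕ) (hd : 2 ≤ d) :
    aCount d = bCount (d - 1) - (if Odd d then aCount ((d - 1) / 2) else 0) := by
  obtain ⟨e, rfl⟩ : ∃ e, d = e + 1 := ⟨d - 1, by omega⟩
  rw [aCount_succ, Nat.add_sub_cancel]
  congr 1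
  by_cases ho : Even e
  · rw [if_pos ⟨ho, by omega⟩, if_pos (Even.add_one ho)]
  · rw [if_neg (fun h => ho h.1), if_neg (fun h => ho (Nat.not_odd_iff_even.mp (Nat.odd_add_one.mp h)))]

lemma aCount_one : aCount 1 = 1 := by
  have h := aCount_succ 0
  simp only [Nat.zero_div, if_neg (by simp : ¬(Even 0 ∧ 0 ≠ 0))] at h
  rw [h]
  simp [bCount, aCount_zero]

/-- a(0) = a(1) = 1 and, for d ≥ 2, a(d) = b(d-1) - [d odd]·a((d-1)/2);
the first values are 1, 1, 2, 4, 12, 34, 108, 344. -/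
theorem avoid_square_recurrence :
    aCount 0 = 1 ∧ aCount 1 = 1 ∧
    (∀ d : ℕ, 2 ≤ d →
      aCount d = bCount (d - 1) - (if Odd d then aCount ((d - 1) / 2) else 0)) ∧
    aCount 2 = 2 ∧ aCount 3 = 4 ∧ aCount 4 = 12 ∧ aCount 5 = 34 ∧
    aCount 6 = 108 ∧ aCount 7 = 344 := by
  have a0 := aCount_zero
  have a1 := aCount_one
  have a2 : aCount 2 = 2 := by
    rw [aCount_rec 2 (by norm_num), if_neg (by norm_num)]
    norm_num [bCount, Finset.sum_range_succ, a0, a1]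
  have a3 : aCount 3 = 4 := by
    rw [aCount_rec 3 (by norm_num), if_pos ⟨1, by norm_num⟩]
    norm_num [bCount, Finset.sum_range_succ, a0, a1, a2]
  have a4 : aCount 4 = 12 := by
    rw [aCount_rec 4 (by norm_num), if_neg (Nat.not_odd_iff_even.mpr ⟨2, by norm_num⟩)]
    norm_num [bCount, Finset.sum_range_succ, a0, a1, a2, a3]
  have a5 : aCount 5 = 34 := by
    rw [aCount_rec 5 (by norm_num), if_pos ⟨2, by norm_num⟩]
    norm_num [bCount, Finset.sum_range_succ, a0, a1, a2, a3, a4]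
  have a6 : aCount 6 = 108 := by
    rw [aCount_rec 6 (by norm_num), if_neg (Nat.not_odd_iff_even.mpr ⟨3, by norm_num⟩)]
    norm_num [bCount, Finset.sum_range_succ, a0, a1, a2, a3, a4, a5]
  have a7 : aCount 7 = 344 := by
    rw [aCount_rec 7 (by norm_num), if_pos ⟨3, by norm_num⟩]
    norm_num [bCount, Finset.sum_range_succ, a0, a1, a2, a3, a4, a5, a6]
  exact ⟨a0, a1, aCount_rec, a2, a3, a4, a5, a6, a7⟩
end
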